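/- Fix an integer n ∈ {0, 1, 2}. In ℝ³ with the Euclidean norm, let v₁ = (0, √3, 0), v₂ = (3, 0, 0), v₃ = (n + 1/2, √3/2, 1). Suppose a, b, c ∈ ℤ are not all zero and the vector v = a·v₁ + b·v₂ + c·v₃ satisfies ‖v‖ ≤ 3 and, in addition, there exists k ∈ ℤ with 3√3 = k·‖v‖³ or there exists k ∈ ℤ with 27 = k·‖v‖³. Then v = v₁, v = −v₁, v = v₂, or v = −v₂. -/

import Mathlib

noncomputable section

open Real

/-- `v₁ = (0, √3, 0)`. -/
def v₁ : EuclideanSpace ℝ (Fin 3) := !₂[0, Real.sqrt 3, 0]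

/-- `v₂ = (3, 0, 0)`. -/
def v₂ : EuclideanSpace ℝ (Fin 3) := !₂[3, 0, 0]

/-- `v₃ = (n + 1/2, √3/2, 1)`. -/
def v₃ (n : ℤ) : EuclideanSpace ℝ (Fin 3) := !₂[(n : ℝ) + 1 / 2, Real.sqrt 3 / 2, 1]

lemma no_sq_aux (k s : ℤ) (hs : 0 ≤ s) (h1 : s^2 < k^2) (h2 : k^2 < (s+1)^2) : False := by
  have h3 : s < |k| := by nlinarith [abs_nonneg k, sq_abs k]
  nlinarith [sq_abs k, abs_nonneg k]

lemma nt1_aux (q k : ℤ) (h1 : 1 ≤ q) (h2 : q ≤ 36) (h : k ^ 2 * q ^ 3 = 1728) :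
    q = 3 ∨ q = 12 := by
  interval_cases q <;>
    first
    | tauto
    | omega
    | exact absurd h (by intro h; exact no_sq_aux k 41 (by norm_num) (by nlinarith) (by nlinarith))
    | exact absurd h (by intro h; exact no_sq_aux k 14 (by norm_num) (by nlinarith) (by nlinarith))
    | exact absurd h (by intro h; exact no_sq_aux k 5 (by norm_num) (by nlinarith) (by nlinarith))
    | exact absurd h (by intro h; exact no_sq_aux k 2 (by norm_num) (by nlinarith) (by nlinarith))

lemma nt2_aux (q k : ℤ) (h1 : 1 ≤ q) (h2 : q ≤ 36) (h : k ^ 2 * q ^ 3 = 46656) :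
    q = 1 ∨ q = 4 ∨ q = 9 ∨ q = 36 := by
  interval_cases q <;>
    first
    | tauto
    | omega
    | exact absurd h (by intro h; exact no_sq_aux k 76 (by norm_num) (by nlinarith) (by nlinarith))
    | exact absurd h (by intro h; exact no_sq_aux k 41 (by norm_num) (by nlinarith) (by nlinarith))
    | exact absurd h (by intro h; exact no_sq_aux k 14 (by norm_num) (by nlinarith) (by nlinarith))
    | exact absurd h (by intro h; exact no_sq_aux k 5 (by norm_num) (by nlinarith) (by nlinarith))
    | exact absurd h (by intro h; exact no_sq_aux k 2 (by norm_num) (by nlinarith) (by nlinarith))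

set_option maxHeartbeats 4000000 in
lemma key_aux (A B C q : ℤ)
    (hq : q = 3 ∨ q = 12 ∨ q = 1 ∨ q = 4 ∨ q = 9 ∨ q = 36)
    (hA : A % 2 = C % 2) (hB : B % 2 = C % 2) (hA6 : C = 0 → A % 6 = 0)
    (heq : A ^ 2 + 3 * B ^ 2 + 4 * C ^ 2 = q) :
    (A = 0 ∧ B = 2 ∧ C = 0) ∨ (A = 0 ∧ B = -2 ∧ C = 0) ∨
    (A = 6 ∧ B = 0 ∧ C = 0) ∨ (A = -6 ∧ B = 0 ∧ C = 0) := by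
  have hq36 : q ≤ 36 := by omega
  have hA1 : -6 ≤ A := by nlinarith [sq_nonneg B, sq_nonneg C, sq_nonneg (A + 6)]
  have hA2 : A ≤ 6 := by nlinarith [sq_nonneg B, sq_nonneg C, sq_nonneg (A - 6)]
  have hB1 : -3 ≤ B := by nlinarith [sq_nonneg A, sq_nonneg C, sq_nonneg (B + 3)]
  have hB2 : B ≤ 3 := by nlinarith [sq_nonneg A, sq_nonneg C, sq_nonneg (B - 3)]
  have hC1 : -3 ≤ C := by nlinarith [sq_nonneg A, sq_nonneg B, sq_nonneg (C + 3)]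
  have hC2 : C ≤ 3 := by nlinarith [sq_nonneg A, sq_nonneg B, sq_nonneg (C - 3)]
  interval_cases A <;> interval_cases B <;> interval_cases C <;> omega

set_option maxHeartbeats 2000000 in
/-- The lattice computation of Appendix B: for `n ∈ {0,1,2}`, the only
nonzero vectors `v = a·v₁ + b·v₂ + c·v₃` (`a, b, c ∈ ℤ`) of the lattice
generated by `v₁, v₂, v₃` with `‖v‖ ≤ 3` such that `3√3 / ‖v‖³` or
`27 / ‖v‖³` is an integer are `±v₁` and `±v₂`. -/
theorem appendixB_lattice_computation (n : ℤ) (hn : n = 0 ∨ n = 1 ∨ n = 2)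
    (a b c : ℤ) (habc : ¬(a = 0 ∧ b = 0 ∧ c = 0))
    (v : EuclideanSpace ℝ (Fin 3))
    (hv : v = (a : ℝ) • v₁ + (b : ℝ) • v₂ + (c : ℝ) • v₃ n)
    (hlen : ‖v‖ ≤ 3)
    (hint : (∃ k : ℤ, 3 * Real.sqrt 3 = (k : ℝ) * ‖v‖ ^ 3) ∨
            (∃ k : ℤ, (27 : ℝ) = (k : ℝ) * ‖v‖ ^ 3)) :
    v = v₁ ∨ v = -v₁ ∨ v = v₂ ∨ v = -v₂ := by
  have h3 : Real.sqrt 3 ^ 2 = 3 := Real.sq_sqrt (by norm_num)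
  set Q : ℤ := (6*b+(2*n+1)*c)^2 + 3*(2*a+c)^2 + 4*c^2 with hQdef
  -- norm squared
  have hq4 : ‖v‖ ^ 2 * 4 = (Q : ℝ) := by
    have h1 : ‖v‖ ^ 2 = ∑ i, ‖v i‖ ^ 2 := by
      rw [EuclideanSpace.norm_eq]; exact Real.sq_sqrt (by positivity)
    have hv0 : v 0 = 3 * b + (n + 1/2) * c := by
      rw [hv]; simp [v₁, v₂, v₃]; ring
    have hv1 : v 1 = Real.sqrt 3 * a + Real.sqrt 3 / 2 * c := by
      rw [hv]; simp [v₁, v₂, v₃]; ring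
    have hv2 : v 2 = c := by
      rw [hv]; simp [v₁, v₂, v₃]
    rw [Fin.sum_univ_three, hv0, hv1, hv2] at h1
    simp only [Real.norm_eq_abs, sq_abs] at h1
    rw [h1, hQdef]; push_cast
    linear_combination (4 * ((a:ℝ) + (c:ℝ)/2)^2) * h3
  -- bounds on Q
  have hQ36 : Q ≤ 36 := by
    have hr : (Q : ℝ) ≤ 36 := by nlinarith [norm_nonneg v]
    exact_mod_cast hr
  have hQ1 : 1 ≤ Q := by
    rcases lt_or_ge 0 Q with h | h
    · omega
    · exfalso
      have e1 : (6*b+(2*n+1)*c)^2 = 0 := by nlinarith [sq_nonneg (6*b+(2*n+1)*c), sq_nonneg (2*a+c), sq_nonneg c]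
      have e2 : (2*a+c)^2 = 0 := by nlinarith [sq_nonneg (6*b+(2*n+1)*c), sq_nonneg (2*a+c), sq_nonneg c]
      have e3 : c^2 = 0 := by nlinarith [sq_nonneg (6*b+(2*n+1)*c), sq_nonneg (2*a+c), sq_nonneg c]
      have f1 : 6*b+(2*n+1)*c = 0 := (pow_eq_zero_iff two_ne_zero).mp e1
      have f2 : 2*a+c = 0 := (pow_eq_zero_iff two_ne_zero).mp e2
      have f3 : c = 0 := (pow_eq_zero_iff two_ne_zero).mp e3
      have f4 : 6*b = 0 := by rw [f3] at f1; linear_combination f1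
      exact habc ⟨by omega, by omega, f3⟩
  -- integrality condition
  have hQcases : Q = 3 ∨ Q = 12 ∨ Q = 1 ∨ Q = 4 ∨ Q = 9 ∨ Q = 36 := by
    rcases hint with ⟨k, hk⟩ | ⟨k, hk⟩
    · have hsq : (27:ℝ) = (k:ℝ)^2 * (‖v‖^2)^3 := by
        have h2 : (3*Real.sqrt 3)^2 = ((k:ℝ)*‖v‖^3)^2 := by rw [hk]
        linear_combination h2 - 9*h3
      have hc3 : (‖v‖^2*4)^3 = ((Q:ℤ):ℝ)^3 := by rw [hq4]
      have hz : ((k^2 * Q^3 : ℤ) : ℝ) = 1728 := by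
        push_cast
        linear_combination (-64)*hsq - (k:ℝ)^2 * hc3
      have hz' : k^2 * Q^3 = 1728 := by exact_mod_cast hz
      have := nt1_aux Q k hQ1 hQ36 hz'
      tauto
    · have hsq : (729:ℝ) = (k:ℝ)^2 * (‖v‖^2)^3 := by
        have h2 : ((27:ℝ))^2 = ((k:ℝ)*‖v‖^3)^2 := by rw [hk]
        linear_combination h2
      have hc3 : (‖v‖^2*4)^3 = ((Q:ℤ):ℝ)^3 := by rw [hq4]
      have hz : ((k^2 * Q^3 : ℤ) : ℝ) = 46656 := by
        push_cast
        linear_combination (-64)*hsq - (k:ℝ)^2 * hc3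
      have hz' : k^2 * Q^3 = 46656 := by exact_mod_cast hz
      have := nt2_aux Q k hQ1 hQ36 hz'
      tauto
  -- apply the lattice key lemma
  obtain ⟨m, hm⟩ : ∃ m, 6*b+(2*n+1)*c = c + 2*m := ⟨3*b+n*c, by ring⟩
  have hA : (6*b+(2*n+1)*c) % 2 = c % 2 := by omega
  have hB : (2*a+c) % 2 = c % 2 := by omega
  have hA6 : c = 0 → (6*b+(2*n+1)*c) % 6 = 0 := by
    intro h
    have : 6*b+(2*n+1)*c = 6*b := by rw [h]; ring
    rw [this]; omega
  have hkey := key_aux (6*b+(2*n+1)*c) (2*a+c) c Q hQcases hA hB hA6 hQdef.symm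
  rcases hkey with ⟨e1, e2, e3⟩ | ⟨e1, e2, e3⟩ | ⟨e1, e2, e3⟩ | ⟨e1, e2, e3⟩
  · -- a = 1, b = 0, c = 0 : v = v₁
    left
    have hb : b = 0 := by rw [e3] at e1; (have h6 : 6*b = 0 := by linear_combination e1); omega
    have ha : a = 1 := by omega
    rw [hv, ha, hb, e3]; push_cast; simp
  · right; left
    have hb : b = 0 := by rw [e3] at e1; (have h6 : 6*b = 0 := by linear_combination e1); omega
    have ha : a = -1 := by omega
    rw [hv, ha, hb, e3]; push_cast; simp
  · right; right; left
    have hb : b = 1 := by rw [e3] at e1; (have h6 : 6*b = 6 := by linear_combination e1); omega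
    have ha : a = 0 := by omega
    rw [hv, ha, hb, e3]; push_cast; simp
  · right; right; right
    have hb : b = -1 := by rw [e3] at e1; (have h6 : 6*b = -6 := by linear_combination e1); omega
    have ha : a = 0 := by omega
    rw [hv, ha, hb, e3]; push_cast; simp
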